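/- Let T > 0 and let u, v be measurable functions on ℝ × [0,T]. Then ‖u v‖_{L^{6/5}_{x,t}} ≤ T^{3/8 + 7/18} ‖u‖_{L^∞_t L^2_x}^{3/4} ‖u‖_{L^6_{x,t}}^{1/4} ‖v‖_{L^∞_t L^2_x}^{7/9} ‖v‖_{L^8_{x,t}}^{2/9}. -/

import Mathlib

open MeasureTheory Filter Topology
open scoped ENNReal

lemma hoelder4 {α : Type*} [MeasurableSpace α] (μ : Measure α) (f g h k : α → ℝ≥0∞)
    (hf : AEMeasurable f μ) (hg : AEMeasurable g μ) (hh : AEMeasurable h μ)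
    (hk : AEMeasurable k μ) {p q r s : ℝ} (hp : 0 ≤ p) (hq : 0 ≤ q) (hr : 0 ≤ r) (hs : 0 ≤ s)
    (hsum : p + q + r + s = 1) :
    ∫⁻ a, f a ^ p * g a ^ q * h a ^ r * k a ^ s ∂μ ≤
      (∫⁻ a, f a ∂μ) ^ p * (∫⁻ a, g a ∂μ) ^ q * (∫⁻ a, h a ∂μ) ^ r * (∫⁻ a, k a ∂μ) ^ s := by
  have := ENNReal.lintegral_prod_norm_pow_le (μ := μ) Finset.univ
    (f := ![f, g, h, k]) (p := ![p, q, r, s])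
    (by intro i _; fin_cases i <;> assumption)
    (by simp [Fin.sum_univ_four]; linarith)
    (by intro i _; fin_cases i <;> assumption)
  simpa [Fin.prod_univ_four, mul_assoc] using this

lemma hoelder3 {α : Type*} [MeasurableSpace α] (μ : Measure α) (f g h : α → ℝ≥0∞)
    (hf : AEMeasurable f μ) (hg : AEMeasurable g μ) (hh : AEMeasurable h μ)
    {p q r : ℝ} (hp : 0 ≤ p) (hq : 0 ≤ q) (hr : 0 ≤ r) (hsum : p + q + r = 1) :
    ∫⁻ a, f a ^ p * g a ^ q * h a ^ r ∂μ ≤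
      (∫⁻ a, f a ∂μ) ^ p * (∫⁻ a, g a ∂μ) ^ q * (∫⁻ a, h a ∂μ) ^ r := by
  have := ENNReal.lintegral_prod_norm_pow_le (μ := μ) Finset.univ
    (f := ![f, g, h]) (p := ![p, q, r])
    (by intro i _; fin_cases i <;> assumption)
    (by simp [Fin.sum_univ_three]; linarith)
    (by intro i _; fin_cases i <;> assumption)
  simpa [Fin.prod_univ_three, mul_assoc] using this

/-- Hölder/interpolation estimate (4.2) for the coupling term:
‖uv‖_{L^{6/5}_{x,t}} ≤ T^{3/8+7/18} ‖u‖_{L^∞_t L²_x}^{3/4} ‖u‖_{L⁶_{x,t}}^{1/4}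
‖v‖_{L^∞_t L²_x}^{7/9} ‖v‖_{L⁸_{x,t}}^{2/9} on ℝ × [0,T]. -/
theorem stmt_14 (T : ℝ) (hT : 0 < T) (u : ℝ → ℝ → ℂ) (v : ℝ → ℝ → ℝ)
    (hu : Measurable (Function.uncurry u)) (hv : Measurable (Function.uncurry v)) :
    eLpNorm (fun q : ℝ × ℝ => u q.1 q.2 * ((v q.1 q.2 : ℝ) : ℂ)) ((6 : ℝ≥0∞) / 5)
        ((volume : Measure ℝ).prod ((volume : Measure ℝ).restrict (Set.Icc 0 T))) ≤
      ENNReal.ofReal (T ^ ((3 : ℝ) / 8 + (7 : ℝ) / 18)) *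
        (⨆ t ∈ Set.Icc (0 : ℝ) T,
          eLpNorm (fun x : ℝ => u x t) 2 (volume : Measure ℝ)) ^ ((3 : ℝ) / 4) *
        (eLpNorm (fun q : ℝ × ℝ => u q.1 q.2) 6
          ((volume : Measure ℝ).prod ((volume : Measure ℝ).restrict (Set.Icc 0 T))))
            ^ ((1 : ℝ) / 4) *
        (⨆ t ∈ Set.Icc (0 : ℝ) T,
          eLpNorm (fun x : ℝ => v x t) 2 (volume : Measure ℝ)) ^ ((7 : ℝ) / 9) *
        (eLpNorm (fun q : ℝ × ℝ => v q.1 q.2) 8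
          ((volume : Measure ℝ).prod ((volume : Measure ℝ).restrict (Set.Icc 0 T))))
            ^ ((2 : ℝ) / 9) := by
  set μt : Measure ℝ := (volume : Measure ℝ).restrict (Set.Icc 0 T) with hμt
  set μ : Measure (ℝ × ℝ) := (volume : Measure ℝ).prod μt with hμ
  set F : ℝ × ℝ → ℝ≥0∞ := fun q => (‖u q.1 q.2‖₊ : ℝ≥0∞) with hF
  set G : ℝ × ℝ → ℝ≥0∞ := fun q => (‖v q.1 q.2‖₊ : ℝ≥0∞) with hG
  set Su : ℝ≥0∞ := ⨆ t ∈ Set.Icc (0 : ℝ) T,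
      eLpNorm (fun x : ℝ => u x t) 2 (volume : Measure ℝ) with hSu
  set Sv : ℝ≥0∞ := ⨆ t ∈ Set.Icc (0 : ℝ) T,
      eLpNorm (fun x : ℝ => v x t) 2 (volume : Measure ℝ) with hSv
  have hFm : Measurable F := hu.enorm
  have hGm : Measurable G := hv.enorm
  have hFs : ∀ t : ℝ, Measurable (fun x : ℝ => F (x, t)) := fun t =>
    (hu.of_uncurry_right).enorm
  have hGs : ∀ t : ℝ, Measurable (fun x : ℝ => G (x, t)) := fun t =>
    (hv.of_uncurry_right).enorm
  set B : ℝ → ℝ≥0∞ := fun t => ∫⁻ x, F (x, t) ^ (6 : ℝ) ∂(volume : Measure ℝ) with hB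
  set D : ℝ → ℝ≥0∞ := fun t => ∫⁻ x, G (x, t) ^ (8 : ℝ) ∂(volume : Measure ℝ) with hD
  have hBm : Measurable B := Measurable.lintegral_prod_left (hFm.pow_const _)
  have hDm : Measurable D := Measurable.lintegral_prod_left (hGm.pow_const _)
  set IB : ℝ≥0∞ := ∫⁻ q, F q ^ (6 : ℝ) ∂μ with hIB
  set ID : ℝ≥0∞ := ∫⁻ q, G q ^ (8 : ℝ) ∂μ with hID
  -- slice norms
  have heu : ∀ t : ℝ, eLpNorm (fun x : ℝ => u x t) 2 (volume : Measure ℝ)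
      = (∫⁻ x, F (x, t) ^ (2 : ℝ) ∂(volume : Measure ℝ)) ^ ((1 : ℝ)/2) := by
    intro t
    rw [eLpNorm_eq_lintegral_rpow_enorm_toReal (by norm_num) (by norm_num)]
    norm_num [hF, enorm_eq_nnnorm]
  have hev : ∀ t : ℝ, eLpNorm (fun x : ℝ => v x t) 2 (volume : Measure ℝ)
      = (∫⁻ x, G (x, t) ^ (2 : ℝ) ∂(volume : Measure ℝ)) ^ ((1 : ℝ)/2) := by
    intro t
    rw [eLpNorm_eq_lintegral_rpow_enorm_toReal (by norm_num) (by norm_num)]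
    norm_num [hG, enorm_eq_nnnorm]
  have hA : ∀ t ∈ Set.Icc (0 : ℝ) T,
      (∫⁻ x, F (x, t) ^ (2 : ℝ) ∂(volume : Measure ℝ)) ≤ Su ^ (2 : ℝ) := by
    intro t ht
    have h1 : eLpNorm (fun x : ℝ => u x t) 2 (volume : Measure ℝ) ≤ Su := by
      rw [hSu]; exact le_biSup (fun t => eLpNorm (fun x : ℝ => u x t) 2 (volume : Measure ℝ)) ht
    calc (∫⁻ x, F (x, t) ^ (2 : ℝ) ∂(volume : Measure ℝ))
        = ((∫⁻ x, F (x, t) ^ (2 : ℝ) ∂(volume : Measure ℝ)) ^ ((1:ℝ)/2)) ^ (2:ℝ) := by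
          rw [← ENNReal.rpow_mul]; norm_num
      _ = (eLpNorm (fun x : ℝ => u x t) 2 (volume : Measure ℝ)) ^ (2:ℝ) := by rw [heu t]
      _ ≤ Su ^ (2:ℝ) := ENNReal.rpow_le_rpow h1 (by norm_num)
  have hC : ∀ t ∈ Set.Icc (0 : ℝ) T,
      (∫⁻ x, G (x, t) ^ (2 : ℝ) ∂(volume : Measure ℝ)) ≤ Sv ^ (2 : ℝ) := by
    intro t ht
    have h1 : eLpNorm (fun x : ℝ => v x t) 2 (volume : Measure ℝ) ≤ Sv := by
      rw [hSv]; exact le_biSup (fun t => eLpNorm (fun x : ℝ => v x t) 2 (volume : Measure ℝ)) ht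
    calc (∫⁻ x, G (x, t) ^ (2 : ℝ) ∂(volume : Measure ℝ))
        = ((∫⁻ x, G (x, t) ^ (2 : ℝ) ∂(volume : Measure ℝ)) ^ ((1:ℝ)/2)) ^ (2:ℝ) := by
          rw [← ENNReal.rpow_mul]; norm_num
      _ = (eLpNorm (fun x : ℝ => v x t) 2 (volume : Measure ℝ)) ^ (2:ℝ) := by rw [hev t]
      _ ≤ Sv ^ (2:ℝ) := ENNReal.rpow_le_rpow h1 (by norm_num)
  -- Hölder in x at fixed time
  have hx : ∀ t ∈ Set.Icc (0 : ℝ) T,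
      (∫⁻ x, (F (x, t) * G (x, t)) ^ ((6:ℝ)/5) ∂(volume : Measure ℝ)) ≤
        (Su ^ ((9:ℝ)/10) * Sv ^ ((14:ℝ)/15)) * ((B t) ^ ((1:ℝ)/20) * (D t) ^ ((1:ℝ)/30)) := by
    intro t ht
    have H := hoelder4 (volume : Measure ℝ)
      (fun x => F (x, t) ^ (2:ℝ)) (fun x => F (x, t) ^ (6:ℝ))
      (fun x => G (x, t) ^ (2:ℝ)) (fun x => G (x, t) ^ (8:ℝ))
      ((hFs t).pow_const _).aemeasurable ((hFs t).pow_const _).aemeasurable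
      ((hGs t).pow_const _).aemeasurable ((hGs t).pow_const _).aemeasurable
      (p := 9/20) (q := 1/20) (r := 7/15) (s := 1/30)
      (by norm_num) (by norm_num) (by norm_num) (by norm_num) (by norm_num)
    have Heq : ∀ x : ℝ,
        (F (x, t) ^ (2:ℝ)) ^ ((9:ℝ)/20) * (F (x, t) ^ (6:ℝ)) ^ ((1:ℝ)/20) *
          (G (x, t) ^ (2:ℝ)) ^ ((7:ℝ)/15) * (G (x, t) ^ (8:ℝ)) ^ ((1:ℝ)/30)
        = (F (x, t) * G (x, t)) ^ ((6:ℝ)/5) := by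
      intro x
      rw [← ENNReal.rpow_mul, ← ENNReal.rpow_mul, ← ENNReal.rpow_mul, ← ENNReal.rpow_mul,
        ENNReal.mul_rpow_of_nonneg _ _ (by norm_num : (0:ℝ) ≤ 6/5)]
      rw [show (2:ℝ) * (9/20) = 9/10 by norm_num, show (6:ℝ) * (1/20) = 3/10 by norm_num,
        show (2:ℝ) * (7/15) = 14/15 by norm_num, show (8:ℝ) * (1/30) = 4/15 by norm_num]
      rw [mul_assoc (F (x,t) ^ ((9:ℝ)/10) * F (x,t) ^ ((3:ℝ)/10)),
        ← ENNReal.rpow_add_of_nonneg ((9:ℝ)/10) ((3:ℝ)/10) (by norm_num) (by norm_num),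
        ← ENNReal.rpow_add_of_nonneg ((14:ℝ)/15) ((4:ℝ)/15) (by norm_num) (by norm_num)]
      norm_num
    calc (∫⁻ x, (F (x, t) * G (x, t)) ^ ((6:ℝ)/5) ∂(volume : Measure ℝ))
        = ∫⁻ x, (F (x, t) ^ (2:ℝ)) ^ ((9:ℝ)/20) * (F (x, t) ^ (6:ℝ)) ^ ((1:ℝ)/20) *
            (G (x, t) ^ (2:ℝ)) ^ ((7:ℝ)/15) * (G (x, t) ^ (8:ℝ)) ^ ((1:ℝ)/30)
            ∂(volume : Measure ℝ) := (lintegral_congr fun x => (Heq x).symm)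
      _ ≤ (∫⁻ x, F (x, t) ^ (2:ℝ) ∂volume) ^ ((9:ℝ)/20) *
            (∫⁻ x, F (x, t) ^ (6:ℝ) ∂volume) ^ ((1:ℝ)/20) *
            (∫⁻ x, G (x, t) ^ (2:ℝ) ∂volume) ^ ((7:ℝ)/15) *
            (∫⁻ x, G (x, t) ^ (8:ℝ) ∂volume) ^ ((1:ℝ)/30) := H
      _ = ((∫⁻ x, F (x, t) ^ (2:ℝ) ∂volume) ^ ((9:ℝ)/20) *
            (∫⁻ x, G (x, t) ^ (2:ℝ) ∂volume) ^ ((7:ℝ)/15)) *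
            ((B t) ^ ((1:ℝ)/20) * (D t) ^ ((1:ℝ)/30)) := by rw [hB, hD]; ring
      _ ≤ (Su ^ ((9:ℝ)/10) * Sv ^ ((14:ℝ)/15)) * ((B t) ^ ((1:ℝ)/20) * (D t) ^ ((1:ℝ)/30)) := by
          refine mul_le_mul' (mul_le_mul' ?_ ?_) le_rfl
          · calc (∫⁻ x, F (x, t) ^ (2:ℝ) ∂volume) ^ ((9:ℝ)/20)
                ≤ (Su ^ (2:ℝ)) ^ ((9:ℝ)/20) := ENNReal.rpow_le_rpow (hA t ht) (by norm_num)
              _ = Su ^ ((9:ℝ)/10) := by rw [← ENNReal.rpow_mul]; norm_num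
          · calc (∫⁻ x, G (x, t) ^ (2:ℝ) ∂volume) ^ ((7:ℝ)/15)
                ≤ (Sv ^ (2:ℝ)) ^ ((7:ℝ)/15) := ENNReal.rpow_le_rpow (hC t ht) (by norm_num)
              _ = Sv ^ ((14:ℝ)/15) := by rw [← ENNReal.rpow_mul]; norm_num
  -- Hölder in time
  have hIBt : (∫⁻ t, B t ∂μt) = IB := by
    rw [hIB, hμ, lintegral_prod_symm' _ (hFm.pow_const _)]
  have hIDt : (∫⁻ t, D t ∂μt) = ID := by
    rw [hID, hμ, lintegral_prod_symm' _ (hGm.pow_const _)]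
  have hT1 : (∫⁻ _, (1:ℝ≥0∞) ∂μt) = ENNReal.ofReal T := by
    rw [lintegral_one, hμt, Measure.restrict_apply_univ, Real.volume_Icc, sub_zero]
  have htime : (∫⁻ t, (B t) ^ ((1:ℝ)/20) * (D t) ^ ((1:ℝ)/30) ∂μt) ≤
      (ENNReal.ofReal T) ^ ((11:ℝ)/12) * IB ^ ((1:ℝ)/20) * ID ^ ((1:ℝ)/30) := by
    have H := hoelder3 μt (fun _ => (1:ℝ≥0∞)) B D
      aemeasurable_const hBm.aemeasurable hDm.aemeasurable
      (p := 11/12) (q := 1/20) (r := 1/30)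
      (by norm_num) (by norm_num) (by norm_num) (by norm_num)
    simp only [ENNReal.one_rpow, one_mul] at H
    calc (∫⁻ t, (B t) ^ ((1:ℝ)/20) * (D t) ^ ((1:ℝ)/30) ∂μt)
        ≤ (∫⁻ _, (1:ℝ≥0∞) ∂μt) ^ ((11:ℝ)/12) * (∫⁻ t, B t ∂μt) ^ ((1:ℝ)/20) *
            (∫⁻ t, D t ∂μt) ^ ((1:ℝ)/30) := H
      _ = (ENNReal.ofReal T) ^ ((11:ℝ)/12) * IB ^ ((1:ℝ)/20) * ID ^ ((1:ℝ)/30) := by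
          rw [hT1, hIBt, hIDt]
  -- main product-integral bound
  have hmain : (∫⁻ q, (F q * G q) ^ ((6:ℝ)/5) ∂μ) ≤
      (Su ^ ((9:ℝ)/10) * Sv ^ ((14:ℝ)/15)) *
        ((ENNReal.ofReal T) ^ ((11:ℝ)/12) * IB ^ ((1:ℝ)/20) * ID ^ ((1:ℝ)/30)) := by
    have hswap : (∫⁻ q, (F q * G q) ^ ((6:ℝ)/5) ∂μ)
        = ∫⁻ t, ∫⁻ x, (F (x, t) * G (x, t)) ^ ((6:ℝ)/5) ∂(volume : Measure ℝ) ∂μt := by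
      rw [hμ]; exact lintegral_prod_symm' _ ((hFm.mul hGm).pow_const _)
    rw [hswap]
    calc (∫⁻ t, ∫⁻ x, (F (x, t) * G (x, t)) ^ ((6:ℝ)/5) ∂(volume : Measure ℝ) ∂μt)
        ≤ ∫⁻ t, (Su ^ ((9:ℝ)/10) * Sv ^ ((14:ℝ)/15)) *
            ((B t) ^ ((1:ℝ)/20) * (D t) ^ ((1:ℝ)/30)) ∂μt := by
          refine lintegral_mono_ae ?_
          filter_upwards [ae_restrict_mem measurableSet_Icc] with t ht
          exact hx t ht
      _ = (Su ^ ((9:ℝ)/10) * Sv ^ ((14:ℝ)/15)) *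
            ∫⁻ t, (B t) ^ ((1:ℝ)/20) * (D t) ^ ((1:ℝ)/30) ∂μt :=
          lintegral_const_mul _ ((hBm.pow_const _).mul (hDm.pow_const _))
      _ ≤ _ := mul_le_mul' le_rfl htime
  -- conclude
  have h6 : eLpNorm (fun q : ℝ × ℝ => u q.1 q.2) 6 μ = IB ^ ((1:ℝ)/6) := by
    rw [eLpNorm_eq_lintegral_rpow_enorm_toReal (by norm_num) (by norm_num)]
    norm_num [hIB, hF, enorm_eq_nnnorm]
  have h8 : eLpNorm (fun q : ℝ × ℝ => v q.1 q.2) 8 μ = ID ^ ((1:ℝ)/8) := by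
    rw [eLpNorm_eq_lintegral_rpow_enorm_toReal (by norm_num) (by norm_num)]
    norm_num [hID, hG, enorm_eq_nnnorm]
  have hLHS : eLpNorm (fun q : ℝ × ℝ => u q.1 q.2 * ((v q.1 q.2 : ℝ) : ℂ)) ((6 : ℝ≥0∞) / 5) μ
      = (∫⁻ q, (F q * G q) ^ ((6:ℝ)/5) ∂μ) ^ ((5:ℝ)/6) := by
    rw [eLpNorm_eq_lintegral_rpow_enorm_toReal (by norm_num) (by simp [ENNReal.div_eq_top])]
    have htr : ((6 : ℝ≥0∞)/5).toReal = 6/5 := by norm_num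
    rw [htr]
    congr 1
    · refine lintegral_congr fun q => ?_
      congr 1
      rw [hF, hG, enorm_eq_nnnorm]
      push_cast [nnnorm_mul, Complex.nnnorm_real]
      ring
    · norm_num
  rw [hLHS, h6, h8]
  calc (∫⁻ q, (F q * G q) ^ ((6:ℝ)/5) ∂μ) ^ ((5:ℝ)/6)
      ≤ ((Su ^ ((9:ℝ)/10) * Sv ^ ((14:ℝ)/15)) *
          ((ENNReal.ofReal T) ^ ((11:ℝ)/12) * IB ^ ((1:ℝ)/20) * ID ^ ((1:ℝ)/30))) ^ ((5:ℝ)/6) :=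
        ENNReal.rpow_le_rpow hmain (by norm_num)
    _ = ENNReal.ofReal (T ^ ((3:ℝ)/8 + (7:ℝ)/18)) * Su ^ ((3:ℝ)/4) *
          (IB ^ ((1:ℝ)/6)) ^ ((1:ℝ)/4) * Sv ^ ((7:ℝ)/9) * (ID ^ ((1:ℝ)/8)) ^ ((2:ℝ)/9) := by
        rw [ENNReal.mul_rpow_of_nonneg _ _ (by norm_num : (0:ℝ) ≤ 5/6),
          ENNReal.mul_rpow_of_nonneg _ _ (by norm_num : (0:ℝ) ≤ 5/6),
          ENNReal.mul_rpow_of_nonneg _ _ (by norm_num : (0:ℝ) ≤ 5/6),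
          ENNReal.mul_rpow_of_nonneg _ _ (by norm_num : (0:ℝ) ≤ 5/6)]
        rw [← ENNReal.rpow_mul Su, ← ENNReal.rpow_mul Sv, ← ENNReal.rpow_mul (ENNReal.ofReal T),
          ← ENNReal.rpow_mul IB, ← ENNReal.rpow_mul ID,
          ← ENNReal.rpow_mul IB, ← ENNReal.rpow_mul ID]
        rw [ENNReal.ofReal_rpow_of_pos hT]
        rw [show ((11:ℝ)/12 * (5/6)) = 55/72 by norm_num,
          show ((3:ℝ)/8 + 7/18) = 55/72 by norm_num,
          show ((9:ℝ)/10 * (5/6)) = 3/4 by norm_num,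
          show ((14:ℝ)/15 * (5/6)) = 7/9 by norm_num,
          show ((1:ℝ)/20 * (5/6)) = 1/24 by norm_num,
          show ((1:ℝ)/30 * (5/6)) = 1/36 by norm_num,
          show ((1:ℝ)/6 * (1/4)) = 1/24 by norm_num,
          show ((1:ℝ)/8 * (2/9)) = 1/36 by norm_num]
        ring
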